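/- For any real x > 0 and a > 0, (Γ(a+1)/(2πi)) ∫_{1+iℝ} e^{zx}/z^{a+1} dz = x^a, and for x ≤ 0 the integral equals 0. -/

import Mathlib

open Complex MeasureTheory Real Set Metric

lemma aux_int {s b : ℝ} (hs : -1 < s) (hb : 0 < b) :
    IntegrableOn (fun t : ℝ => t ^ s * Real.exp (-b * t)) (Ioi 0) := by
  simpa [Real.rpow_one] using integrableOn_rpow_mul_exp_neg_mul_rpow hs zero_lt_one hb

lemma aux_norm {t : ℝ} (ht : 0 < t) (c : ℝ) (b : ℂ) :
    ‖(t : ℂ) ^ (c : ℂ) * Complex.exp (-b * t)‖ = t ^ c * Real.exp (-b.re * t) := by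
  rw [norm_mul, Complex.norm_cpow_eq_rpow_re_of_pos ht, Complex.norm_exp]
  simp

lemma aux_cont (c : ℝ) (b : ℂ) :
    ContinuousOn (fun t : ℝ => (t : ℂ) ^ (c : ℂ) * Complex.exp (-b * t)) (Ioi 0) := by
  intro t ht
  have h1 : ContinuousAt (fun t : ℝ => (t : ℂ) ^ (c : ℂ)) t :=
    (continuousAt_cpow_const (Or.inl (by simpa using ht))).comp
      Complex.continuous_ofReal.continuousAt
  have h2 : Continuous (fun t : ℝ => Complex.exp (-b * t)) :=
    Complex.continuous_exp.comp (by continuity)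
  exact (h1.mul h2.continuousAt).continuousWithinAt

lemma aux_meas (c : ℝ) (b : ℂ) :
    AEStronglyMeasurable (fun t : ℝ => (t : ℂ) ^ (c : ℂ) * Complex.exp (-b * t))
      (volume.restrict (Ioi 0)) :=
  (aux_cont c b).aestronglyMeasurable measurableSet_Ioi

lemma aux_integrable {c : ℝ} (hc : -1 < c) {b : ℂ} (hb : 0 < b.re) :
    IntegrableOn (fun t : ℝ => (t : ℂ) ^ (c : ℂ) * Complex.exp (-b * t)) (Ioi 0) := by
  refine ⟨aux_meas c b, ?_⟩
  apply HasFiniteIntegral.mono' (aux_int hc hb).2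
  filter_upwards [ae_restrict_mem measurableSet_Ioi] with t ht
  rw [aux_norm ht]

lemma gamma_int_complex {a : ℝ} (ha : 0 < a) {b : ℂ} (hb : 0 < b.re) :
    ∫ t in Ioi (0 : ℝ), (t : ℂ) ^ (a : ℂ) * Complex.exp (-b * t)
      = Complex.Gamma ((a : ℂ) + 1) / b ^ ((a : ℂ) + 1) := by
  set U : Set ℂ := {z | 0 < z.re} with hU
  have hUopen : IsOpen U := isOpen_lt continuous_const Complex.continuous_re
  set f : ℂ → ℂ := fun b => ∫ t in Ioi (0 : ℝ), (t : ℂ) ^ (a : ℂ) * Complex.exp (-b * t)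
    with hf
  set g : ℂ → ℂ := fun b => Complex.Gamma ((a : ℂ) + 1) / b ^ ((a : ℂ) + 1) with hg
  have hfd : DifferentiableOn ℂ f U := by
    intro b₀ hb₀
    have hre : 0 < b₀.re := hb₀
    have key : ∀ b ∈ Metric.ball b₀ (b₀.re / 2), b₀.re / 2 ≤ b.re := by
      intro b hbb
      have : |(b - b₀).re| ≤ ‖b - b₀‖ := Complex.abs_re_le_norm _
      rw [Metric.mem_ball, dist_eq_norm] at hbb
      have := abs_le.mp (this.trans hbb.le)
      simp only [Complex.sub_re] at this
      linarith [this.1]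
    have hmain := hasDerivAt_integral_of_dominated_loc_of_deriv_le
      (F := fun b (t : ℝ) => (t : ℂ) ^ (a : ℂ) * Complex.exp (-b * t))
      (F' := fun b (t : ℝ) => (t : ℂ) ^ (a : ℂ) * (-(t : ℂ) * Complex.exp (-b * t)))
      (μ := volume.restrict (Ioi 0)) (x₀ := b₀)
      (bound := fun t : ℝ => t ^ (a + 1) * Real.exp (-(b₀.re / 2) * t))
      (Metric.ball_mem_nhds b₀ (half_pos hre)) (Filter.Eventually.of_forall fun b => aux_meas a b)
      (aux_integrable (by linarith) hre) ?_ ?_ ?_ ?_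
    · exact hmain.2.differentiableAt.differentiableWithinAt
    · -- measurability of F' at b₀
      apply AEStronglyMeasurable.congr (f := fun t : ℝ =>
        -((t : ℂ) ^ ((a + 1 : ℝ) : ℂ) * Complex.exp (-b₀ * t)))
      · exact ((aux_meas (a + 1) b₀).neg)
      · filter_upwards [ae_restrict_mem measurableSet_Ioi] with t ht
        have h1 : (t : ℂ) ^ ((a + 1 : ℝ) : ℂ) = (t : ℂ) ^ (a : ℂ) * (t : ℂ) := by
          rw [show ((a + 1 : ℝ) : ℂ) = (a : ℂ) + 1 by push_cast; ring,
            Complex.cpow_add _ _ (by exact_mod_cast ht.ne'), Complex.cpow_one]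
        rw [h1]; ring
    · -- bound
      filter_upwards [ae_restrict_mem measurableSet_Ioi] with t ht b hbb
      have h1 : ‖(t : ℂ) ^ (a : ℂ) * (-(t : ℂ) * Complex.exp (-b * t))‖
          = t ^ (a + 1) * Real.exp (-b.re * t) := by
        have h1 : (t : ℂ) ^ (a : ℂ) * (-(t : ℂ) * Complex.exp (-b * t))
            = -((t : ℂ) ^ ((a + 1 : ℝ) : ℂ) * Complex.exp (-b * t)) := by
          rw [show ((a + 1 : ℝ) : ℂ) = (a : ℂ) + 1 by push_cast; ring,
            Complex.cpow_add _ _ (by exact_mod_cast ht.ne'), Complex.cpow_one]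
          ring
        rw [h1, norm_neg, aux_norm ht]
      rw [h1]
      have hk := key b hbb
      apply mul_le_mul_of_nonneg_left _ (Real.rpow_nonneg (le_of_lt ht) _)
      exact Real.exp_le_exp.2 (by nlinarith [(mem_Ioi.mp ht).le])
    · -- bound integrable
      exact aux_int (by linarith) (half_pos hre)
    · -- derivative
      filter_upwards [ae_restrict_mem measurableSet_Ioi] with t ht b hbb
      have : HasDerivAt (fun b : ℂ => Complex.exp (-b * t)) (-(t : ℂ) * Complex.exp (-b * t)) b := by
        have h2 : HasDerivAt (fun b : ℂ => -b * (t : ℂ)) (-(t : ℂ)) b := by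
          simpa using ((hasDerivAt_id b).neg.mul_const (t : ℂ))
        simpa [mul_comm] using h2.cexp
      exact this.const_mul _
  have hgd : DifferentiableOn ℂ g U := by
    intro z hz
    have hz' : (0:ℝ) < z.re := hz
    apply DifferentiableAt.differentiableWithinAt
    apply DifferentiableAt.div (differentiableAt_const _)
    · exact (differentiableAt_id.cpow (differentiableAt_const _) (Or.inl hz'))
    · intro h
      rcases (Complex.cpow_eq_zero_iff _ _).mp h with ⟨hz0, -⟩
      rw [hz0] at hz'; simp at hz'
  have heq1 : ∀ r : ℝ, 0 < r → f r = g r := by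
    intro r hr
    have h := integral_cpow_mul_exp_neg_mul_Ioi (a := (a : ℂ) + 1)
      (r := r) (by simp; linarith) hr
    have h2 : ∀ t : ℝ, (t : ℂ) ^ ((a : ℂ) + 1 - 1) * Complex.exp (-(r * t))
        = (t : ℂ) ^ (a : ℂ) * Complex.exp (-(r : ℂ) * t) := by
      intro t
      norm_num
    rw [show f ↑r = ∫ t in Ioi (0:ℝ), (t : ℂ) ^ ((a:ℂ) + 1 - 1) * Complex.exp (-(r * t)) by
      rw [hf]; exact (integral_congr_ae (Filter.Eventually.of_forall fun t => (h2 t).symm)), h]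
    rw [hg, one_div, Complex.inv_cpow _ _ (by
      rw [Complex.arg_ofReal_of_nonneg hr.le]; exact Real.pi_ne_zero.symm), mul_comm]
    rfl
  have hfreq : ∃ᶠ z in nhdsWithin (1 : ℂ) {(1:ℂ)}ᶜ, f z = g z := by
    have h1 : Filter.Tendsto (fun n : ℕ => ((1 + 1 / (n + 1) : ℝ) : ℂ)) Filter.atTop
        (nhdsWithin (1 : ℂ) {(1:ℂ)}ᶜ) := by
      apply tendsto_nhdsWithin_of_tendsto_nhds_of_eventually_within
      · have : Filter.Tendsto (fun n : ℕ => (1 + 1 / (n + 1) : ℝ)) Filter.atTop (nhds 1) := by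
          simpa using (tendsto_const_nhds (x := (1:ℝ))).add (tendsto_one_div_add_atTop_nhds_zero_nat (𝕜 := ℝ))
        have h2 := (Complex.continuous_ofReal.tendsto 1).comp this
        rw [show ((1:ℝ):ℂ) = 1 from Complex.ofReal_one] at h2
        exact h2
      · filter_upwards with n
        simp only [Set.mem_compl_iff, Set.mem_singleton_iff]
        intro h
        rw [show (1 : ℂ) = ((1 : ℝ) : ℂ) by norm_num, Complex.ofReal_inj] at h
        have : 0 < 1 / ((n : ℝ) + 1) := by positivity
        linarith
    exact h1.frequently (Filter.Eventually.of_forall (fun n : ℕ =>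
      heq1 (1 + 1 / ((n : ℝ) + 1)) (by positivity))).frequently
  have hUpre : IsPreconnected U := (convex_halfSpace_re_gt 0).isPreconnected
  have h1U : (1 : ℂ) ∈ U := by simp [hU]
  exact (hfd.analyticOnNhd hUopen).eqOn_of_preconnected_of_frequently_eq
    (hgd.analyticOnNhd hUopen) hUpre h1U hfreq (show b ∈ U from hb)

open FourierTransform

noncomputable def gfun (a : ℝ) : ℝ → ℂ :=
  fun t => if 0 < t then (t : ℂ) ^ (a : ℂ) * Complex.exp (-(1 : ℂ) * t) else 0

lemma gfun_eq_indicator (a : ℝ) :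
    gfun a = Set.indicator (Ioi (0 : ℝ))
      (fun t => (t : ℂ) ^ (a : ℂ) * Complex.exp (-(1 : ℂ) * t)) := by
  ext t; simp [gfun, Set.indicator_apply, mem_Ioi]

lemma gfun_integrable {a : ℝ} (ha : 0 < a) : Integrable (gfun a) := by
  rw [gfun_eq_indicator]
  rw [integrable_indicator_iff measurableSet_Ioi]
  exact aux_integrable (by linarith) (by norm_num)

lemma gfun_fourier {a : ℝ} (ha : 0 < a) (ξ : ℝ) :
    𝓕 (gfun a) ξ = Complex.Gamma ((a : ℂ) + 1)
      / (1 + (2 * π * ξ : ℝ) * Complex.I) ^ ((a : ℂ) + 1) := by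
  have hb : (0:ℝ) < (1 + (2 * π * ξ : ℝ) * Complex.I).re := by simp
  rw [Real.fourier_eq']
  have step : ∀ v : ℝ, Complex.exp ((↑(-2 * π * (inner ℝ v ξ : ℝ)) * Complex.I)) • gfun a v
      = Set.indicator (Ioi (0:ℝ))
        (fun t => (t : ℂ) ^ (a : ℂ)
          * Complex.exp (-(1 + (2 * π * ξ : ℝ) * Complex.I) * t)) v := by
    intro v
    rw [gfun_eq_indicator]
    by_cases hv : v ∈ Ioi (0:ℝ)
    · rw [Set.indicator_of_mem hv, Set.indicator_of_mem hv, smul_eq_mul]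
      rw [mul_comm, mul_assoc, ← Complex.exp_add]
      congr 2
      simp only [RCLike.inner_apply, conj_trivial]
      push_cast
      ring
    · rw [Set.indicator_of_notMem hv, Set.indicator_of_notMem hv, smul_zero]
  rw [integral_congr_ae (Filter.Eventually.of_forall step),
    integral_indicator measurableSet_Ioi]
  exact gamma_int_complex ha hb

lemma abs_b_ge {ξ : ℝ} : (1 + ξ ^ 2) ^ ((1:ℝ)/2) ≤ ‖(1 + (2 * π * ξ : ℝ) * Complex.I : ℂ)‖ := by
  have h1 : ‖(1 + (2 * π * ξ : ℝ) * Complex.I : ℂ)‖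
      = Real.sqrt (1 + (2 * π * ξ) ^ 2) := by
    rw [Complex.norm_def, Complex.normSq_apply]
    simp
    ring_nf
  rw [h1, Real.sqrt_eq_rpow]
  apply Real.rpow_le_rpow (by positivity) _ (by norm_num)
  have hpi : (1:ℝ) ≤ π := by nlinarith [Real.pi_gt_three]
  have h2 : (1:ℝ) ≤ π ^ 2 := by nlinarith
  nlinarith [mul_nonneg (by linarith : (0:ℝ) ≤ π ^ 2 - 1) (sq_nonneg ξ)]

lemma fourier_gfun_integrable {a : ℝ} (ha : 0 < a) : Integrable (𝓕 (gfun a)) := by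
  have hmeas : AEStronglyMeasurable (𝓕 (gfun a)) volume :=
    (VectorFourier.fourierIntegral_continuous Real.continuous_fourierChar
      (by exact continuous_inner) (gfun_integrable ha)).aestronglyMeasurable
  apply Integrable.mono'
    ((integrable_rpow_neg_one_add_norm_sq (E := ℝ)
      (r := a + 1) (by simp; linarith)).const_mul (Real.Gamma (a+1)))
    hmeas
  filter_upwards with ξ
  rw [gfun_fourier ha ξ]
  have hbne : (1 + (2 * π * ξ : ℝ) * Complex.I) ≠ 0 := by
    intro h
    have := congrArg Complex.re h
    simp at this
  rw [norm_div]
  have h1 : ((a : ℂ) + 1) = ((a + 1 : ℝ) : ℂ) := by push_cast; ring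
  rw [h1, Complex.norm_cpow_real]
  have hG : ‖Complex.Gamma ((a:ℝ) + 1 : ℂ)‖ = Real.Gamma (a + 1) := by
    rw [show ((a:ℝ) + 1 : ℂ) = ((a + 1 : ℝ) : ℂ) by push_cast; ring, Complex.Gamma_ofReal]
    simp only [Complex.norm_real, Real.norm_eq_abs]
    exact abs_of_pos (Real.Gamma_pos_of_pos (by linarith))
  rw [show ((a:ℂ) + 1) = ((a + 1 : ℝ) : ℂ) by push_cast; ring] at *
  rw [hG]
  have habs : (0:ℝ) < ‖(1 + (2 * π * ξ : ℝ) * Complex.I : ℂ)‖ :=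
    norm_pos_iff.mpr hbne
  rw [div_le_iff₀ (Real.rpow_pos_of_pos habs _)]
  have k1 : (1 + ξ^2) ^ ((a+1)/2 : ℝ)
      ≤ ‖(1 + (2 * π * ξ : ℝ) * Complex.I : ℂ)‖ ^ (a+1) := by
    have h3 := Real.rpow_le_rpow (Real.rpow_nonneg (by positivity : (0:ℝ) ≤ 1 + ξ^2) _)
      (abs_b_ge (ξ := ξ)) (by linarith : (0:ℝ) ≤ a + 1)
    rw [← Real.rpow_mul (by positivity : (0:ℝ) ≤ 1 + ξ^2), one_div, inv_mul_eq_div] at h3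
    exact h3
  have k2 : (1 + ‖ξ‖^2 : ℝ) ^ (-(a+1)/2 : ℝ) * (1 + ξ^2) ^ ((a+1)/2 : ℝ) = 1 := by
    rw [Real.norm_eq_abs, _root_.sq_abs, ← Real.rpow_add (by positivity)]
    rw [show (-(a+1)/2 + (a+1)/2 : ℝ) = 0 by ring, Real.rpow_zero]
  calc Real.Gamma (a+1)
      = Real.Gamma (a+1) * ((1 + ‖ξ‖^2 : ℝ) ^ (-(a+1)/2 : ℝ) * (1 + ξ^2) ^ ((a+1)/2 : ℝ)) := by
        rw [k2, mul_one]
    _ ≤ Real.Gamma (a+1) * ((1 + ‖ξ‖^2 : ℝ) ^ (-(a+1)/2 : ℝ)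
        * ‖(1 + (2 * π * ξ : ℝ) * Complex.I : ℂ)‖ ^ (a+1)) := by
        have hΓ : 0 ≤ Real.Gamma (a+1) := (Real.Gamma_pos_of_pos (by linarith)).le
        have := mul_le_mul_of_nonneg_left k1 (Real.rpow_nonneg (by positivity : (0:ℝ) ≤ 1 + ‖ξ‖^2) (-(a+1)/2 : ℝ))
        exact mul_le_mul_of_nonneg_left this hΓ
    _ = Real.Gamma (a+1) * (1 + ‖ξ‖^2 : ℝ) ^ (-(a+1)/2 : ℝ)
        * ‖(1 + (2 * π * ξ : ℝ) * Complex.I : ℂ)‖ ^ (a+1) := by ring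

lemma gfun_continuousAt {a : ℝ} (ha : 0 < a) (x : ℝ) : ContinuousAt (gfun a) x := by
  rcases lt_trichotomy x 0 with hx | hx | hx
  · apply ContinuousAt.congr (continuousAt_const : ContinuousAt (fun _ : ℝ => (0:ℂ)) x)
    filter_upwards [Iio_mem_nhds hx] with t ht
    simp [gfun, not_lt.2 (le_of_lt (mem_Iio.mp ht))]
  · subst hx
    have h0 : gfun a 0 = 0 := by simp [gfun]
    rw [ContinuousAt, h0]
    have hbound : ∀ t : ℝ, ‖gfun a t‖ ≤ |t| ^ a := ?_
    rotate_left
    · intro t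
      by_cases ht : 0 < t
      · simp only [gfun, if_pos ht]
        rw [aux_norm ht]
        calc t ^ a * Real.exp ((-(1:ℂ)).re * t) ≤ t ^ a * 1 := by
              apply mul_le_mul_of_nonneg_left _ (Real.rpow_nonneg ht.le _)
              rw [Real.exp_le_one_iff]
              simp; linarith
          _ = |t| ^ a := by rw [mul_one, abs_of_pos ht]
      · simp only [gfun, if_neg ht, norm_zero]
        exact Real.rpow_nonneg (abs_nonneg t) a
    · refine squeeze_zero_norm hbound ?_
      have hc : ContinuousAt (fun s : ℝ => |s| ^ a) 0 :=
        (Real.continuousAt_rpow_const _ a (Or.inr ha.le)).comp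
          continuous_abs.continuousAt
      have := hc.tendsto
      simpa [Real.zero_rpow ha.ne'] using this
  · apply ContinuousAt.congr ((aux_cont a 1).continuousAt (Ioi_mem_nhds hx))
    filter_upwards [Ioi_mem_nhds hx] with t ht
    simp [gfun, if_pos (show (0:ℝ) < t from ht)]

lemma key_eval {a : ℝ} (ha : 0 < a) (x : ℝ) :
    (Real.Gamma (a + 1) : ℂ) / (2 * Real.pi * Complex.I) *
        (∫ t : ℝ, Complex.exp ((1 + t * Complex.I) * x)
          / (1 + t * Complex.I) ^ ((a : ℂ) + 1) * Complex.I)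
      = Complex.exp x * gfun a x := by
  have hΓR : Real.Gamma (a + 1) ≠ 0 := (Real.Gamma_pos_of_pos (by linarith)).ne'
  have hΓ : Complex.Gamma ((a : ℂ) + 1) = ((Real.Gamma (a + 1) : ℝ) : ℂ) := by
    rw [show ((a:ℂ)+1) = ((a+1:ℝ):ℂ) by push_cast; ring, Complex.Gamma_ofReal]
  set h : ℝ → ℂ := fun t => Complex.exp (((t * x : ℝ) : ℂ) * Complex.I)
    / (1 + (t : ℂ) * Complex.I) ^ ((a : ℂ) + 1) with hh
  have hinv := (gfun_integrable ha).fourierInv_fourier_eq (fourier_gfun_integrable ha)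
    (gfun_continuousAt ha x)
  rw [Real.fourierInv_eq'] at hinv
  have hint : ∀ v : ℝ, Complex.exp (((2 * π * (inner ℝ v x : ℝ) : ℝ) : ℂ) * Complex.I)
        • 𝓕 (gfun a) v
      = ((Real.Gamma (a + 1) : ℝ) : ℂ) * h (2 * π * v) := by
    intro v
    rw [gfun_fourier ha v, hΓ, smul_eq_mul, hh]
    simp only [RCLike.inner_apply, conj_trivial]
    rw [show (2 * π * (x * v) : ℝ) = (2 * π * v) * x by ring]
    push_cast
    ring
  rw [integral_congr_ae (Filter.Eventually.of_forall hint), MeasureTheory.integral_const_mul] at hinv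
  -- hinv : ↑Γ * ∫ v, h (2 * π * v) = gfun a x
  have hsub := MeasureTheory.Measure.integral_comp_mul_left h (2 * π)
  -- change of variables
  set A : ℂ := ∫ v : ℝ, h (2 * π * v) with hA
  have hπ : (0:ℝ) < 2 * π := by positivity
  have hT : (∫ t : ℝ, h t) = ((2 * π : ℝ) : ℂ) * A := by
    rw [hsub, abs_of_pos (inv_pos.2 hπ), Complex.real_smul]
    rw [← mul_assoc, ← Complex.ofReal_mul, mul_inv_cancel₀ hπ.ne', Complex.ofReal_one, one_mul]
  have hpt : ∀ t : ℝ, Complex.exp ((1 + t * Complex.I) * x)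
      / (1 + t * Complex.I) ^ ((a : ℂ) + 1) * Complex.I
      = (Complex.I * Complex.exp x) * h t := by
    intro t
    rw [hh, show ((1:ℂ) + t * Complex.I) * x = (x : ℂ) + ((t * x : ℝ) : ℂ) * Complex.I by
      push_cast; ring, Complex.exp_add]
    simp only [div_eq_mul_inv]
    ring
  rw [integral_congr_ae (Filter.Eventually.of_forall hpt), MeasureTheory.integral_const_mul, hT]
  rw [← hinv]
  have hI : Complex.I ≠ 0 := Complex.I_ne_zero
  have hπC : ((π : ℝ) : ℂ) ≠ 0 := Complex.ofReal_ne_zero.2 Real.pi_ne_zero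
  have hΓC : ((Real.Gamma (a + 1) : ℝ) : ℂ) ≠ 0 := Complex.ofReal_ne_zero.2 hΓR
  push_cast
  field_simp

/-- `(Γ(a+1)/(2πi)) ∫_{1+iℝ} e^{zx}/z^{a+1} dz = x^a` for `x > 0`, and the
integral vanishes for `x ≤ 0`.  Contour `z = 1 + i t`, `dz = i dt`,
principal branch of `z^(a+1)`. -/
theorem contour_integral_exp_div_cpow (x a : ℝ) (ha : 0 < a) :
    (0 < x →
      (Real.Gamma (a + 1) : ℂ) / (2 * Real.pi * Complex.I) *
          ∫ t : ℝ,
            Complex.exp ((1 + t * Complex.I) * x) / (1 + t * Complex.I) ^ ((a : ℂ) + 1) *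
              Complex.I = ((x ^ a : ℝ) : ℂ)) ∧
    (x ≤ 0 →
      (Real.Gamma (a + 1) : ℂ) / (2 * Real.pi * Complex.I) *
          ∫ t : ℝ,
            Complex.exp ((1 + t * Complex.I) * x) / (1 + t * Complex.I) ^ ((a : ℂ) + 1) *
              Complex.I = 0) := by
  constructor
  · intro hx
    rw [key_eval ha x, show gfun a x = (x:ℂ)^(a:ℂ) * Complex.exp (-(1:ℂ)*x) from if_pos hx]
    rw [show (-(1:ℂ) * (x:ℂ)) = -(x:ℂ) by ring]
    rw [mul_comm, mul_assoc, ← Complex.exp_add, neg_add_cancel, Complex.exp_zero, mul_one]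
    rw [Complex.ofReal_cpow hx.le]
  · intro hx
    rw [key_eval ha x, show gfun a x = 0 from if_neg (not_lt.2 hx), mul_zero]
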